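/- Let N > 1 be an odd natural number which is either prime or has at least two distinct prime factors. Let b ∈ ℤ and let f ∈ ℤ[X] be a digit polynomial of N to base b (i.e. f(b) = N) such that gcd(lc f, N) = 1 and d := deg f is smaller than q := max{q' prime : q' ∣ N}, the largest prime factor of N. Then N is prime if and only if for every x ∈ Z_N, f(x)^{(N−1)/2} mod N ∈ {0, 1, N−1} (i.e. f(x)^{(N−1)/2} ≡ −1, 0 or 1 mod N). -/

import Mathlib

open Polynomial

private lemma emod_eq_of_zmod_eq {N : ℕ} (v r : ℤ) (h : (v : ZMod N) = (r : ZMod N))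
    (h0 : 0 ≤ r) (h1 : r < N) : v % N = r := by
  have := (ZMod.intCast_eq_intCast_iff' v r N).mp h
  rwa [Int.emod_eq_of_lt h0 h1] at this

/-- Euler-type primality characterization via digit polynomials: let `N > 1` be odd
and either prime or with at least two distinct prime factors. Let `f ∈ ℤ[X]` with
`f(b) = N`, `gcd(lc f, N) = 1`, and `deg f` smaller than the largest prime factor
`q` of `N`. Then `N` is prime iff `f(x)^{(N−1)/2} mod N ∈ {0, 1, N−1}` (i.e.
`f(x)^{(N−1)/2} ≡ −1, 0, 1 (mod N)`) for all `x ∈ Z_N`. -/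
theorem primality_characterization_euler (N : ℕ) (hN1 : 1 < N) (hodd : Odd N)
    (hcases : N.Prime ∨ 2 ≤ N.primeFactors.card)
    (b : ℤ) (f : Polynomial ℤ) (hf : f.eval b = (N : ℤ))
    (hlc : Int.gcd f.leadingCoeff (N : ℤ) = 1)
    (q : ℕ) (hq : q.Prime) (hqN : q ∣ N)
    (hqmax : ∀ q' : ℕ, q'.Prime → q' ∣ N → q' ≤ q)
    (hdeg : f.natDegree < q) :
    N.Prime ↔ ∀ x ∈ Finset.range N,
      (f.eval ((x : ℕ) : ℤ)) ^ ((N - 1) / 2) % (N : ℤ) = 0 ∨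
      (f.eval ((x : ℕ) : ℤ)) ^ ((N - 1) / 2) % (N : ℤ) = 1 ∨
      (f.eval ((x : ℕ) : ℤ)) ^ ((N - 1) / 2) % (N : ℤ) = (N : ℤ) - 1 := by
  have hN3 : 3 ≤ N := by
    rcases hodd with ⟨k, hk⟩; omega
  set e : ℕ := (N - 1) / 2 with he
  have he0 : e ≠ 0 := by
    have : 2 ∣ N - 1 := by rcases hodd with ⟨k, hk⟩; omega
    omega
  have hN0 : (0:ℤ) < N := by exact_mod_cast Nat.pos_of_ne_zero (by omega)
  constructor
  · -- forward: N prime implies Euler condition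
    intro hP x _
    haveI : Fact N.Prime := ⟨hP⟩
    set a : ℤ := f.eval ((x : ℕ) : ℤ) with ha
    by_cases h0 : (a : ZMod N) = 0
    · left
      have : ((a ^ e : ℤ) : ZMod N) = 0 := by
        push_cast [h0]; exact zero_pow he0
      have := (ZMod.intCast_zmod_eq_zero_iff_dvd _ N).mp this
      exact Int.emod_eq_zero_of_dvd this
    · have h2e : e * 2 = N - 1 := by
        have : 2 ∣ N - 1 := by rcases hodd with ⟨k, hk⟩; omega
        omega
      have hpow : ((a : ZMod N) ^ e) * ((a : ZMod N) ^ e) = 1 := by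
        rw [← pow_add]
        have : e + e = N - 1 := by omega
        rw [this]
        exact ZMod.pow_card_sub_one_eq_one h0
      rcases mul_self_eq_one_iff.mp hpow with h1 | h1
      · right; left
        refine emod_eq_of_zmod_eq (a ^ e) 1 ?_ (by norm_num) (by exact_mod_cast hN1)
        push_cast; rw [h1]
      · right; right
        refine emod_eq_of_zmod_eq (a ^ e) ((N:ℤ) - 1) ?_ (by omega) (by omega)
        push_cast; rw [h1]; simp
  · -- backward
    intro hcond
    by_contra hnp
    have hcard : 2 ≤ N.primeFactors.card := hcases.resolve_left hnp
    have hNne : N ≠ 0 := by omega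
    haveI : Fact q.Prime := ⟨hq⟩
    set m : ℕ := ordCompl[q] N with hm
    have hmN : q ^ N.factorization q * m = N := Nat.ordProj_mul_ordCompl_eq_self N q
    have hmdvd : m ∣ N := ⟨q ^ N.factorization q, by rw [mul_comm]; exact hmN.symm⟩
    have hqm : q.Coprime m := Nat.coprime_ordCompl hq hNne
    -- m ≥ 2
    obtain ⟨p, hpmem, hpq⟩ := Finset.exists_mem_ne hcard q
    have hpprime : p.Prime := Nat.prime_of_mem_primeFactors hpmem
    have hpN : p ∣ N := Nat.dvd_of_mem_primeFactors hpmem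
    have hpm : p ∣ m := Nat.dvd_ordCompl_of_dvd_not_dvd hpN (by
      intro h
      exact hpq ((Nat.prime_dvd_prime_iff_eq hq hpprime).mp h).symm)
    have hm0 : m ≠ 0 := by
      intro h; rw [h, mul_zero] at hmN; omega
    have hm2 : 2 ≤ m := le_trans hpprime.two_le (Nat.le_of_dvd (Nat.pos_of_ne_zero hm0) hpm)
    -- find z with g(z) ≠ 0 where g = f mod q
    set g : (ZMod q)[X] := f.map (Int.castRingHom (ZMod q)) with hg
    have hlcq : ((f.leadingCoeff : ℤ) : ZMod q) ≠ 0 := by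
      intro h0
      have hdvd := (ZMod.intCast_zmod_eq_zero_iff_dvd f.leadingCoeff q).mp h0
      have : (q:ℤ) ∣ (Int.gcd f.leadingCoeff (N:ℤ) : ℤ) :=
        Int.natCast_dvd_natCast.mpr (Int.dvd_gcd hdvd (Int.natCast_dvd_natCast.mpr hqN))
      rw [hlc] at this
      have := Int.le_of_dvd one_pos this
      have := hq.two_le
      omega
    have hg0 : g ≠ 0 := by
      intro h
      apply hlcq
      have : g.coeff f.natDegree = 0 := by rw [h]; simp
      rwa [hg, Polynomial.coeff_map] at this
    have hgd : g.natDegree < q := lt_of_le_of_lt Polynomial.natDegree_map_le hdeg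
    obtain ⟨z, hz⟩ := g.exists_eval_ne_zero_of_natDegree_lt_card hg0 (by
      rw [Cardinal.mk_fintype, ZMod.card]
      exact_mod_cast hgd)
    -- CRT
    haveI : NeZero m := ⟨by omega⟩
    obtain ⟨c, hc1, hc2⟩ := Nat.chineseRemainder hqm z.val (b : ZMod m).val
    set x : ℕ := c % N with hx
    have hxN : x < N := Nat.mod_lt c (by omega)
    have hxq : ((x : ℕ) : ZMod q) = z := by
      have : x ≡ c [MOD q] := (Nat.mod_mod_of_dvd c hqN)
      rw [(ZMod.natCast_eq_natCast_iff _ _ _).mpr this,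
        (ZMod.natCast_eq_natCast_iff _ _ _).mpr hc1, ZMod.natCast_val, ZMod.cast_id]
    have hxm : ((x : ℕ) : ZMod m) = (b : ZMod m) := by
      have : x ≡ c [MOD m] := (Nat.mod_mod_of_dvd c hmdvd)
      rw [(ZMod.natCast_eq_natCast_iff _ _ _).mpr this,
        (ZMod.natCast_eq_natCast_iff _ _ _).mpr hc2, ZMod.natCast_val, ZMod.cast_id]
    -- key divisibilities
    set a : ℤ := f.eval ((x : ℕ) : ℤ) with ha
    have hfq : ¬ (q:ℤ) ∣ a := by
      intro hdvd
      apply hz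
      have h0 : ((a : ℤ) : ZMod q) = 0 := (ZMod.intCast_zmod_eq_zero_iff_dvd _ _).mpr hdvd
      have h1 : (g.eval (((x:ℕ):ℤ) : ZMod q)) = ((a : ℤ) : ZMod q) := by
        rw [hg, Polynomial.eval_intCast_map]; rfl
      have h2 : (((x:ℕ):ℤ) : ZMod q) = z := by push_cast; exact hxq
      rw [← h2, h1, h0]
    have hfm : (m:ℤ) ∣ a := by
      have hxb : ((x:ℕ):ℤ) ≡ b [ZMOD m] := by
        have : ((((x:ℕ):ℤ)) : ZMod m) = (b : ZMod m) := by push_cast; exact hxm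
        exact (ZMod.intCast_eq_intCast_iff _ _ _).mp this
      have h1 : (m:ℤ) ∣ b - ((x:ℕ):ℤ) := Int.ModEq.dvd hxb
      have h2 : (((x:ℕ):ℤ) - b) ∣ (a - f.eval b) := Polynomial.sub_dvd_eval_sub _ _ f
      have h3 : (m:ℤ) ∣ (a - f.eval b) := dvd_trans (by
        rw [show ((x:ℕ):ℤ) - b = -(b - ((x:ℕ):ℤ)) by ring]
        exact (dvd_neg).mpr h1) h2
      have h4 : (m:ℤ) ∣ f.eval b := by rw [hf]; exact_mod_cast Int.natCast_dvd_natCast.mpr hmdvd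
      have := dvd_add h3 h4
      simpa using this
    -- apply condition
    have hcx := hcond x (Finset.mem_range.mpr hxN)
    have hNv : ∀ r : ℤ, a ^ e % (N:ℤ) = r → (N:ℤ) ∣ a ^ e - r := by
      intro r hr
      exact Int.dvd_self_sub_of_emod_eq hr
    have hmpow : (m:ℤ) ∣ a ^ e := dvd_pow hfm he0
    have hqZ : Prime (q:ℤ) := Nat.prime_iff_prime_int.mp hq
    rcases hcx with h | h | h
    · -- a^e ≡ 0 mod N : then q ∣ a
      have : (N:ℤ) ∣ a ^ e := Int.dvd_of_emod_eq_zero h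
      have : (q:ℤ) ∣ a ^ e := dvd_trans (Int.natCast_dvd_natCast.mpr hqN) this
      exact hfq (hqZ.dvd_of_dvd_pow this)
    · -- a^e ≡ 1
      have h1 : (m:ℤ) ∣ a ^ e - 1 := dvd_trans (Int.natCast_dvd_natCast.mpr hmdvd) (hNv 1 h)
      have : (m:ℤ) ∣ 1 := by
        have := dvd_sub hmpow h1
        simpa using this
      have := Int.le_of_dvd one_pos this
      exact absurd this (by exact_mod_cast by omega)
    · -- a^e ≡ N - 1
      have h1 : (m:ℤ) ∣ a ^ e - ((N:ℤ) - 1) := dvd_trans (Int.natCast_dvd_natCast.mpr hmdvd) (hNv _ h)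
      have hmn : (m:ℤ) ∣ (N:ℤ) := Int.natCast_dvd_natCast.mpr hmdvd
      have : (m:ℤ) ∣ 1 := by
        have := dvd_sub (dvd_sub hmpow h1) hmn
        have h2 : a ^ e - (a ^ e - ((N:ℤ) - 1)) - (N:ℤ) = -1 := by ring
        rw [h2] at this
        exact (dvd_neg).mp this
      have := Int.le_of_dvd one_pos this
      exact absurd this (by exact_mod_cast by omega)
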